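/- Fix n ≥ 2 and k ≥ 1. Let F be the smallest set of functions from (Fin n)^k to Fin n that contains the k coordinate projections and is closed under the pointwise operations (f, g) ↦ max(f, g) (with respect to the order 0 < 1 < ⋯ < n−1 on Fin n) and f ↦ ∼ ∘ f, where ∼ i = i − 1 (mod n). Then F consists of all functions from (Fin n)^k to Fin n (Post's n-valued logic is functionally complete). -/

import Mathlib

namespace Post5

open Fin.NatCast Fin.CommRing

variable {n : ℕ}

lemma val_one (hn : 2 ≤ n) [NeZero n] : (1 : Fin n).val = 1 := by
  rw [Fin.val_one' n]; exact Nat.mod_eq_of_lt (by omega)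

def M [NeZero n] : Fin n := ⟨n - 1, by have := NeZero.pos n; omega⟩

lemma val_M [NeZero n] : (M : Fin n).val = n - 1 := rfl

lemma le_M [NeZero n] (y : Fin n) : y ≤ M := by
  have := y.isLt; exact Fin.le_def.mpr (by rw [val_M]; omega)

/-- capped increment, iterated: `dit m y = min (y + m) (n-1)` -/
def dit [NeZero n] : ℕ → Fin n → Fin n
  | 0, y => y
  | m+1, y => max (dit m y + 1) (dit m y)

lemma dit_val [NeZero n] (hn : 2 ≤ n) (m : ℕ) (y : Fin n) :
    (dit m y).val = min (y.val + m) (n - 1) := by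
  induction m with
  | zero =>
    have := y.isLt
    simp only [dit]; omega
  | succ m ih =>
    have hd := (dit m y : Fin n).isLt
    have hy := y.isLt
    have hmax : (max (dit m y + 1) (dit m y)).val
        = max ((dit m y + 1) : Fin n).val (dit m y).val := rfl
    show (max (dit m y + 1) (dit m y)).val = _
    rw [hmax, Fin.add_def, val_one hn, ih]
    simp only [Fin.val_mk]
    rcases Nat.lt_or_ge (y.val + m) (n - 1) with h | h
    · rw [Nat.min_eq_left (by omega), Nat.mod_eq_of_lt (by omega)]; omega
    · rw [Nat.min_eq_right (by omega), show n - 1 + 1 = n by omega, Nat.mod_self]; omega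

lemma dit_top [NeZero n] (hn : 2 ≤ n) (y : Fin n) : dit (n-1) y = M := by
  apply Fin.val_injective
  rw [dit_val hn, val_M]
  have := y.isLt
  omega

def delta [NeZero n] (y : Fin n) : Fin n := dit (n-2) (y + 1) + 1

lemma delta_last [NeZero n] (hn : 2 ≤ n) {y : Fin n} (hy : y.val = n - 1) :
    delta y = M := by
  apply Fin.val_injective
  show (dit (n-2) (y+1) + 1).val = (M : Fin n).val
  rw [val_M, Fin.add_def, val_one hn, dit_val hn, Fin.add_def, val_one hn, hy]
  simp only [Fin.val_mk]
  rw [show n - 1 + 1 = n by omega, Nat.mod_self,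
      show (0 + (n-2)) ⊓ (n-1) + 1 = n - 1 by omega, Nat.mod_eq_of_lt (by omega)]

lemma delta_ne [NeZero n] (hn : 2 ≤ n) {y : Fin n} (hy : y.val ≠ n - 1) :
    delta y = 0 := by
  have hylt := y.isLt
  apply Fin.val_injective
  show (dit (n-2) (y+1) + 1).val = (0 : Fin n).val
  rw [Fin.val_zero, Fin.add_def, val_one hn, dit_val hn, Fin.add_def, val_one hn]
  simp only [Fin.val_mk]
  rw [Nat.mod_eq_of_lt (show y.val + 1 < n by omega),
      show (↑y + 1 + (n-2)) ⊓ (n-1) + 1 = n by omega, Nat.mod_self]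

/-- negation on {0, M} -/
def nn [NeZero n] (y : Fin n) : Fin n := delta (y - 1)

lemma nn_zero [NeZero n] (hn : 2 ≤ n) : nn (0 : Fin n) = M := by
  apply delta_last hn
  rw [Fin.sub_def, val_one hn, Fin.val_zero]
  simp only [Fin.val_mk]
  rw [Nat.add_zero, Nat.mod_eq_of_lt (by omega)]

lemma nn_last [NeZero n] (hn : 2 ≤ n) : nn (M : Fin n) = 0 := by
  apply delta_ne hn
  rw [Fin.sub_def, val_one hn, val_M]
  simp only [Fin.val_mk]
  rw [show n - 1 + (n-1) = n + (n-2) by omega, Nat.add_mod_left,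
      Nat.mod_eq_of_lt (by omega)]
  omega

/-- scaling: maps 0 to 0 and M to v -/
def uv [NeZero n] (v y : Fin n) : Fin n :=
  dit (n - 1 - v.val) y - (((n - 1 - v.val : ℕ)) : Fin n)

lemma uv_zero [NeZero n] (hn : 2 ≤ n) (v : Fin n) : uv v (0 : Fin n) = 0 := by
  have h : dit (n - 1 - v.val) (0 : Fin n) = (((n - 1 - v.val : ℕ)) : Fin n) := by
    apply Fin.val_injective
    rw [dit_val hn, Fin.val_zero, Fin.val_natCast, Nat.mod_eq_of_lt (by omega)]
    omega
  rw [uv, h, sub_self]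

lemma uv_last [NeZero n] (hn : 2 ≤ n) (v : Fin n) : uv v (M : Fin n) = v := by
  have hv := v.isLt
  have h : dit (n - 1 - v.val) (M : Fin n) = M := by
    apply Fin.val_injective
    rw [dit_val hn, val_M]
    omega
  rw [uv, h]
  symm
  rw [eq_sub_iff_add_eq]
  apply Fin.val_injective
  rw [Fin.add_def, Fin.val_natCast, val_M]
  simp only [Fin.val_mk]
  rw [Nat.mod_eq_of_lt (show n - 1 - v.val < n by omega),
      Nat.mod_eq_of_lt (by omega)]
  omega

/-- indicator of a: M at a, 0 elsewhere -/
def jj [NeZero n] (a y : Fin n) : Fin n := delta (y - (a + 1))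

lemma sub_succ_val [NeZero n] (hn : 2 ≤ n) (a : Fin n) : (a - (a + 1)).val = n - 1 := by
  have ha := a.isLt
  rw [Fin.sub_def, Fin.add_def, val_one hn]
  simp only [Fin.val_mk]
  rcases eq_or_ne a.val (n - 1) with h | h
  · rw [h, show n - 1 + 1 = n by omega, Nat.mod_self,
        show n - 0 + (n - 1) = n + (n-1) by omega, Nat.add_mod_left,
        Nat.mod_eq_of_lt (by omega)]
  · rw [Nat.mod_eq_of_lt (show a.val + 1 < n by omega),
        show n - (↑a + 1) + ↑a = n - 1 by omega,
        Nat.mod_eq_of_lt (by omega)]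

lemma jj_self [NeZero n] (hn : 2 ≤ n) (a : Fin n) : jj a a = M :=
  delta_last hn (sub_succ_val hn a)

lemma jj_ne [NeZero n] (hn : 2 ≤ n) {a y : Fin n} (h : y ≠ a) : jj a y = 0 := by
  apply delta_ne hn
  intro hv
  apply h
  have h2 : y - (a + 1) = a - (a + 1) :=
    Fin.val_injective (hv.trans (sub_succ_val hn a).symm)
  exact sub_left_injective h2

/-- conjunction on lists of values in {0, M} -/
def andl [NeZero n] : List (Fin n) → Fin n
  | [] => M
  | p :: l => nn (max (nn p) (nn (andl l)))

lemma andl_all [NeZero n] (hn : 2 ≤ n) (l : List (Fin n)) (h : ∀ p ∈ l, p = M) :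
    andl l = M := by
  induction l with
  | nil => rfl
  | cons p l ih =>
    rw [andl, h p (by simp), ih (fun q hq => h q (by simp [hq])), nn_last hn, max_self,
        nn_zero hn]

lemma andl_zero [NeZero n] (hn : 2 ≤ n) (l : List (Fin n)) (h : ∃ p ∈ l, p = 0) :
    andl l = 0 := by
  induction l with
  | nil => simp at h
  | cons p l ih =>
    rw [andl]
    rcases h with ⟨q, hq, hq0⟩
    rcases List.mem_cons.mp hq with rfl | hql
    · rw [hq0, nn_zero hn, max_eq_left (le_M _), nn_last hn]
    · rw [ih ⟨q, hql, hq0⟩, nn_zero hn, max_eq_right (le_M _), nn_last hn]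

end Post5

namespace Post5

open Fin.NatCast Fin.CommRing

section closure

variable {n k : ℕ} [NeZero n] {F : Set ((Fin k → Fin n) → Fin n)}

variable (hn : 2 ≤ n)
  (hmax : ∀ f g : (Fin k → Fin n) → Fin n, f ∈ F → g ∈ F →
      (fun x => max (f x) (g x)) ∈ F)
  (hshift : ∀ f : (Fin k → Fin n) → Fin n, f ∈ F →
      (fun x => f x - 1) ∈ F)

include hn hshift in
lemma mem_sub_nat (m : ℕ) {f} (hf : f ∈ F) :
    (fun x => f x - (m : Fin n)) ∈ F := by
  induction m with
  | zero => simpa using hf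
  | succ m ih =>
    have h2 := hshift _ ih
    have heq : (fun x => f x - ((m+1 : ℕ) : Fin n))
        = (fun x => (f x - (m : Fin n)) - 1) := by
      funext x; push_cast; ring
    rw [heq]; exact h2

include hn hshift in
lemma mem_sub_const (c : Fin n) {f} (hf : f ∈ F) :
    (fun x => f x - c) ∈ F := by
  have := mem_sub_nat hn hshift c.val hf
  simpa [Fin.cast_val_eq_self] using this

include hn hshift in
lemma mem_add_const (c : Fin n) {f} (hf : f ∈ F) :
    (fun x => f x + c) ∈ F := by
  have := mem_sub_const hn hshift (-c) hf
  simpa [sub_neg_eq_add] using this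

include hn hmax hshift in
lemma mem_dit (m : ℕ) {f} (hf : f ∈ F) :
    (fun x => dit m (f x)) ∈ F := by
  induction m with
  | zero => simpa only [dit] using hf
  | succ m ih =>
    have := hmax _ _ (mem_add_const hn hshift 1 ih) ih
    simpa only [dit] using this

include hn hmax hshift in
lemma mem_delta {f} (hf : f ∈ F) : (fun x => delta (f x)) ∈ F := by
  simp only [delta]
  exact mem_add_const hn hshift 1 (mem_dit hn hmax hshift (n-2) (mem_add_const hn hshift 1 hf))

include hn hmax hshift in
lemma mem_nn {f} (hf : f ∈ F) : (fun x => nn (f x)) ∈ F := by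
  simp only [nn]
  exact mem_delta hn hmax hshift (mem_sub_const hn hshift 1 hf)

include hn hmax hshift in
lemma mem_uv (v : Fin n) {f} (hf : f ∈ F) : (fun x => uv v (f x)) ∈ F := by
  simp only [uv]
  exact mem_sub_nat hn hshift _ (mem_dit hn hmax hshift _ hf)

include hn hmax hshift in
lemma mem_constM (hk : 0 < k)
    (hproj : ∀ i : Fin k, (fun x : Fin k → Fin n => x i) ∈ F) :
    (fun _ : Fin k → Fin n => (M : Fin n)) ∈ F := by
  have := mem_dit hn hmax hshift (n-1) (hproj ⟨0, hk⟩)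
  simpa only [dit_top hn] using this

include hn hmax hshift in
lemma mem_andl (hk : 0 < k)
    (hproj : ∀ i : Fin k, (fun x : Fin k → Fin n => x i) ∈ F)
    {ι : Type*} (l : List ι) (g : ι → (Fin k → Fin n) → Fin n)
    (hg : ∀ i ∈ l, g i ∈ F) :
    (fun x => andl (l.map (fun i => g i x))) ∈ F := by
  induction l with
  | nil =>
    simpa only [List.map_nil, andl] using mem_constM hn hmax hshift hk hproj
  | cons i l ih =>
    have h1 := mem_nn hn hmax hshift (hg i (by simp))
    have h2 := mem_nn hn hmax hshift (ih (fun j hj => hg j (by simp [hj])))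
    have h3 := mem_nn hn hmax hshift (hmax _ _ h1 h2)
    simpa only [List.map_cons, andl] using h3

include hmax in
lemma mem_sup' {A : Type*} (s : Finset A) (hs : s.Nonempty)
    (g : A → (Fin k → Fin n) → Fin n) (hg : ∀ a ∈ s, g a ∈ F) :
    (fun x => s.sup' hs (fun a => g a x)) ∈ F := by
  induction hs using Finset.Nonempty.cons_induction with
  | singleton a => simpa only [Finset.sup'_singleton] using hg a (by simp)
  | cons a s ha hs' ih =>
    have h1 := hmax _ _ (hg a (by simp)) (ih (fun b hb => hg b (by simp [hb])))
    have heq : (fun x => (Finset.cons a s ha).sup' (Finset.cons_nonempty ha) (fun b => g b x))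
        = fun x => max (g a x) (s.sup' hs' (fun b => g b x)) := by
      funext x
      rw [Finset.sup'_cons hs']
    rw [heq]
    exact h1

end closure

end Post5

open Post5 in
/-- Post's n-valued logic is functionally complete: every set of
functions (Fin n)^k → Fin n containing the projections and closed under pointwise
max and the cyclic shift i ↦ i − 1 (mod n) contains all functions; hence the
smallest such set consists of all functions. -/
theorem stmt_5 (n k : ℕ) (hn : 2 ≤ n) (hk : 1 ≤ k)
    (F : Set ((Fin k → Fin n) → Fin n))
    (hproj : ∀ i : Fin k, (fun x : Fin k → Fin n => x i) ∈ F)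
    (hmax : ∀ f g : (Fin k → Fin n) → Fin n, f ∈ F → g ∈ F →
      (fun x => max (f x) (g x)) ∈ F)
    (hshift : ∀ f : (Fin k → Fin n) → Fin n, f ∈ F →
      (fun x => f x - (⟨1, by omega⟩ : Fin n)) ∈ F) :
    ∀ h : (Fin k → Fin n) → Fin n, h ∈ F := by
  haveI : NeZero n := ⟨by omega⟩
  intro h
  have h1 : (⟨1, by omega⟩ : Fin n) = (1 : Fin n) := by
    apply Fin.val_injective; rw [val_one hn]
  rw [h1] at hshift
  set G : (Fin k → Fin n) → (Fin k → Fin n) → Fin n :=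
    fun a x => uv (h a) (andl ((List.finRange k).map (fun i => jj (a i) (x i)))) with hG
  have hGmem : ∀ a, G a ∈ F := by
    intro a
    exact mem_uv hn hmax hshift (h a)
      (mem_andl hn hmax hshift hk hproj (List.finRange k)
        (fun i x => jj (a i) (x i))
        (fun i _ => mem_delta hn hmax hshift (mem_sub_const hn hshift _ (hproj i))))
  have hGself : ∀ x, G x x = h x := by
    intro x
    simp only [hG]
    rw [andl_all hn _ (by
      intro p hp
      simp only [List.mem_map] at hp
      obtain ⟨i, _, rfl⟩ := hp
      exact jj_self hn _), uv_last hn]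
  have hGne : ∀ a x, a ≠ x → G a x = 0 := by
    intro a x hne
    obtain ⟨i, hi⟩ : ∃ i, x i ≠ a i := by
      by_contra hc
      push_neg at hc
      exact hne (funext fun i => (hc i).symm)
    simp only [hG]
    rw [andl_zero hn _ ⟨jj (a i) (x i), by
      refine ⟨List.mem_map.mpr ⟨i, by simp, rfl⟩, jj_ne hn hi⟩⟩, uv_zero hn]
  haveI : Nonempty (Fin n) := ⟨0⟩
  have hne : (Finset.univ : Finset (Fin k → Fin n)).Nonempty := Finset.univ_nonempty
  have hmem := mem_sup' hmax Finset.univ hne G (fun a _ => hGmem a)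
  have heq : (fun x => Finset.univ.sup' hne (fun a => G a x)) = h := by
    funext x
    apply le_antisymm
    · apply Finset.sup'_le
      intro a _
      rcases eq_or_ne a x with rfl | hax
      · rw [hGself]
      · rw [hGne a x hax]
        exact Fin.le_def.mpr (by simp)
    · calc h x = G x x := (hGself x).symm
        _ ≤ _ := Finset.le_sup' (fun a => G a x) (Finset.mem_univ x)
  rwa [heq] at hmem
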